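/- arXiv:2402.03250 — 3 statements merged into one kernel-verified Lean document; each statement's English description precedes it below -/
import Mathlib

section
/- Let $w\in L^1_{loc}(\mathbb{R}^n)$, $w>0$ a.e., and suppose there exist $p\in(1,\infty)$ and $C>0$ such that for every ball $B$ of radius $1$ and every measurable $F\subset B$ one has $\int_F w \geq C\big(\tfrac{|F|}{|B|}\big)^p \int_B w$. Then there exist $\delta,c>0$ (depending only on $C,p$) such that for every ball $B$ of radius $1$, $|\{x\in B: w(x)\geq \delta\, w_B\}|\geq c\,|B|$, where $w_B$ is the average of $w$ over $B$. -/
open MeasureTheory Metric Set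
open scoped ENNReal

/-- the quantitative A∞ condition (2) implies the level-set
condition (4), with constants depending only on `C` and `p`. -/
theorem stmt4 (n : ℕ) (p C : ℝ) (hp : 1 < p) (hC : 0 < C) :
    ∃ δ > (0:ℝ), ∃ c > (0:ℝ),
      ∀ w : EuclideanSpace ℝ (Fin n) → ℝ,
        LocallyIntegrable w volume → (∀ᵐ x, 0 < w x) →
        (∀ (x₀ : EuclideanSpace ℝ (Fin n)) (F : Set (EuclideanSpace ℝ (Fin n))),
          F ⊆ ball x₀ 1 → MeasurableSet F →
          C * ((volume F).toReal / (volume (ball x₀ 1)).toReal) ^ p *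
              ∫ x in ball x₀ 1, w x ≤ ∫ x in F, w x) →
        ∀ x₀ : EuclideanSpace ℝ (Fin n),
          ENNReal.ofReal c * volume (ball x₀ 1) ≤
            volume {x ∈ ball x₀ 1 |
              δ * ((volume (ball x₀ 1)).toReal⁻¹ * ∫ y in ball x₀ 1, w y) ≤ w x} := by
  have h2p : (0:ℝ) < (2:ℝ) ^ p := Real.rpow_pos_of_pos (by norm_num) p
  refine ⟨C / (2:ℝ) ^ p, by positivity, 1/2, by norm_num, ?_⟩
  intro w hw hpos h2 x₀
  set δ : ℝ := C / (2:ℝ) ^ p with hδ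
  set B := ball x₀ 1 with hB
  have hBmeas : MeasurableSet B := measurableSet_ball
  have hB0 : 0 < volume B := measure_ball_pos _ _ one_pos
  have hBfin : volume B < ⊤ := measure_ball_lt_top
  have hBreal : 0 < (volume B).toReal := ENNReal.toReal_pos hB0.ne' hBfin.ne
  have hwint : IntegrableOn w B volume :=
    (hw.integrableOn_isCompact (isCompact_closedBall x₀ 1)).mono_set ball_subset_closedBall
  set I : ℝ := ∫ y in B, w y with hIdef
  have hI : 0 < I := by
    rw [hIdef]
    rw [setIntegral_pos_iff_support_of_nonneg_ae]
    · refine lt_of_lt_of_le hB0 (measure_mono_ae ?_)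
      filter_upwards [hpos] with x hx hxB
      exact ⟨hx.ne', hxB⟩
    · filter_upwards [ae_restrict_of_ae hpos] with x hx using hx.le
    · exact hwint
  set a : ℝ := (volume B).toReal⁻¹ * I with hadef
  -- measurable representative
  have hsm : AEStronglyMeasurable w volume := hw.aestronglyMeasurable
  set g := hsm.mk w with hg
  have hgmeas : Measurable g := hsm.stronglyMeasurable_mk.measurable
  have hgae : w =ᵐ[volume] g := hsm.ae_eq_mk
  have hsets : volume {x ∈ B | δ * a ≤ w x} = volume {x ∈ B | δ * a ≤ g x} := by
    apply measure_congr
    filter_upwards [hgae] with x hx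
    show (x ∈ B ∧ δ * a ≤ w x) = (x ∈ B ∧ δ * a ≤ g x)
    rw [hx]
  set F : Set (EuclideanSpace ℝ (Fin n)) := {x ∈ B | g x < δ * a} with hF
  have hFsub : F ⊆ B := fun x hx => hx.1
  have hFmeas : MeasurableSet F := by
    have : F = B ∩ {x | g x < δ * a} := by
      ext x; simp [hF, Set.mem_sep_iff, Set.mem_setOf_eq]
    rw [this]
    exact hBmeas.inter (measurableSet_lt hgmeas measurable_const)
  have hFfin : volume F < ⊤ := lt_of_le_of_lt (measure_mono hFsub) hBfin
  set r : ℝ := (volume F).toReal / (volume B).toReal with hr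
  have hr0 : 0 ≤ r := by positivity
  -- upper bound on ∫_F w
  have hup : ∫ x in F, w x ≤ δ * a * (volume F).toReal := by
    have hmono : ∀ᵐ x ∂(volume.restrict F), w x ≤ δ * a := by
      filter_upwards [ae_restrict_mem hFmeas, ae_restrict_of_ae hgae] with x hxF hxg
      exact hxg ▸ hxF.2.le
    calc ∫ x in F, w x ≤ ∫ _x in F, δ * a :=
          setIntegral_mono_ae_restrict (hwint.mono_set hFsub)
            (integrableOn_const hFfin.ne) hmono
      _ = (volume F).toReal • (δ * a) := by rw [setIntegral_const]; rfl
      _ = δ * a * (volume F).toReal := by rw [smul_eq_mul]; ring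
  have hlow : C * r ^ p * I ≤ ∫ x in F, w x := h2 x₀ F hFsub hFmeas
  have hconv : δ * a * (volume F).toReal = δ * r * I := by
    rw [hadef, hr]; ring
  have hkey : C * r ^ p ≤ C * (1/2 : ℝ) ^ p * r := by
    have h1 : C * r ^ p * I ≤ δ * r * I := by
      calc C * r ^ p * I ≤ ∫ x in F, w x := hlow
        _ ≤ δ * a * (volume F).toReal := hup
        _ = δ * r * I := hconv
    have h2' : C * r ^ p ≤ δ * r := le_of_mul_le_mul_right h1 hI
    have : δ = C * (1/2 : ℝ) ^ p := by
      rw [hδ, div_eq_mul_inv, ← Real.inv_rpow (by norm_num : (0:ℝ) ≤ 2)]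
      norm_num
    calc C * r ^ p ≤ δ * r := h2'
      _ = C * (1/2 : ℝ) ^ p * r := by rw [this]
  have hrhalf : r ≤ 1/2 := by
    by_contra hcon
    push_neg at hcon
    have hrpos : (0:ℝ) < r := lt_trans (by norm_num) hcon
    have hexp : (1/2 : ℝ) ^ p < (1/2 : ℝ) ^ (p - 1) :=
      Real.rpow_lt_rpow_of_exponent_gt (by norm_num) (by norm_num) (by linarith)
    have h1 : (1/2 : ℝ) ^ (p - 1) < r ^ (p - 1) :=
      Real.rpow_lt_rpow (by norm_num) hcon (by linarith)
    have heq : r ^ p = r ^ (p - 1) * r := by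
      rw [show p = (p - 1) + 1 by ring, Real.rpow_add_one hrpos.ne']
      ring_nf
    have hlt : C * (1/2 : ℝ) ^ p * r < C * r ^ p := by
      calc C * (1/2 : ℝ) ^ p * r < C * (1/2 : ℝ) ^ (p-1) * r :=
            mul_lt_mul_of_pos_right (mul_lt_mul_of_pos_left hexp hC) hrpos
        _ < C * r ^ (p-1) * r :=
            mul_lt_mul_of_pos_right (mul_lt_mul_of_pos_left h1 hC) hrpos
        _ = C * r ^ p := by rw [heq]; ring
    linarith
  -- conclude
  have hFhalf : (volume F).toReal ≤ (volume B).toReal / 2 := by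
    have := (div_le_iff₀ hBreal).mp hrhalf
    linarith
  have hgood : {x ∈ B | δ * a ≤ g x} = B \ F := by
    ext x
    simp only [Set.mem_setOf_eq, Set.mem_diff, hF, not_and, not_lt]
    exact ⟨fun ⟨h1, h2⟩ => ⟨h1, fun _ => h2⟩, fun ⟨h1, h2⟩ => ⟨h1, h2 h1⟩⟩
  have hgoodvol : volume {x ∈ B | δ * a ≤ g x} = volume B - volume F := by
    rw [hgood, measure_diff hFsub hFmeas.nullMeasurableSet hFfin.ne]
  have hgoodfin : volume {x ∈ B | δ * a ≤ g x} < ⊤ := by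
    rw [hgoodvol]; exact lt_of_le_of_lt tsub_le_self hBfin
  have hgoodreal : (volume B).toReal / 2 ≤ (volume {x ∈ B | δ * a ≤ g x}).toReal := by
    rw [hgoodvol, ENNReal.toReal_sub_of_le (measure_mono hFsub) hBfin.ne]
    linarith
  rw [hsets]
  calc ENNReal.ofReal (1/2) * volume B
      = ENNReal.ofReal (1/2) * ENNReal.ofReal (volume B).toReal := by
        rw [ENNReal.ofReal_toReal hBfin.ne]
    _ = ENNReal.ofReal ((volume B).toReal / 2) := by
        rw [← ENNReal.ofReal_mul (by norm_num)]; ring_nf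
    _ ≤ ENNReal.ofReal (volume {x ∈ B | δ * a ≤ g x}).toReal :=
        ENNReal.ofReal_le_ofReal hgoodreal
    _ = volume {x ∈ B | δ * a ≤ g x} := ENNReal.ofReal_toReal hgoodfin.ne
end

section
/- In the Euclidean setting ($\mathbb{R}^n$, Lebesgue measure, usual gradient), let $1\leq p<\infty$ and $\alpha\in(0,1)$. There exists $C=C(p,\alpha,n)>0$ such that for every ball $B$ of radius $r\in(0,1]$, every $w\in A^\alpha_\infty(\mathbb{R}^n)$ with $\frac{1}{|B|}\int_B w \geq r^{-p}$, and every $u\in W^{1,p}(B)$: $\int_B (|\nabla u|^p + w|u|^p)\,dx \geq C r^{-p}\int_B |u|^p\,dx$. -/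
open MeasureTheory Metric Set
open scoped ENNReal

/-- The Muckenhoupt-type class `A_∞^α(ℝ^n)` (Definition 2.11 of the paper). -/
def IsAinfty (n : ℕ) (α : ℝ) (w : EuclideanSpace ℝ (Fin n) → ℝ) : Prop :=
  LocallyIntegrable w volume ∧ (∀ᵐ x, 0 < w x) ∧
  ∀ (x₀ : EuclideanSpace ℝ (Fin n)) (r : ℝ), 0 < r →
    ∀ E ⊆ ball x₀ r, MeasurableSet E →
      ENNReal.ofReal (1 - α) * volume (ball x₀ r) ≤ volume E →
      α * ∫ x in ball x₀ r, w x ≤ ∫ x in E, w x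

variable {n : ℕ}

lemma lint_comp_smul_add (f : EuclideanSpace ℝ (Fin n) → ℝ≥0∞) (hf : Measurable f)
    {c : ℝ} (hc : c ≠ 0) (v : EuclideanSpace ℝ (Fin n)) :
    ∫⁻ z, f (c • z + v) = ENNReal.ofReal |(c ^ n)⁻¹| * ∫⁻ z, f z := by
  have h2 : ∫⁻ z, f (c • z + v) = ∫⁻ w, f (w + v) ∂(Measure.map (c • ·) volume) :=
    (lintegral_map (hf.comp (measurable_add_const v)) (measurable_const_smul c)).symm
  rw [h2, Measure.map_addHaar_smul volume hc, lintegral_smul_measure,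
    finrank_euclideanSpace_fin, lintegral_add_right_eq_self f v, smul_eq_mul]

lemma lint_shift_bound (f : EuclideanSpace ℝ (Fin n) → ℝ≥0∞) (hf : Measurable f)
    {c : ℝ} (hc : 1 / 2 ≤ c) (v : EuclideanSpace ℝ (Fin n))
    {S T : Set (EuclideanSpace ℝ (Fin n))} (hS : MeasurableSet S) (hT : MeasurableSet T)
    (hmap : ∀ z ∈ S, c • z + v ∈ T) :
    ∫⁻ z in S, f (c • z + v) ≤ 2 ^ n * ∫⁻ z in T, f z := by
  have hc0 : (0:ℝ) < c := lt_of_lt_of_le (by norm_num) hc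
  have h1 : ∫⁻ z in S, f (c • z + v) = ∫⁻ z in S, (T.indicator f) (c • z + v) :=
    setLIntegral_congr_fun hS (fun z hz => (indicator_of_mem (hmap z hz) f).symm)
  rw [h1]
  calc ∫⁻ z in S, (T.indicator f) (c • z + v)
      ≤ ∫⁻ z, (T.indicator f) (c • z + v) := setLIntegral_le_lintegral _ _
    _ = ENNReal.ofReal |(c ^ n)⁻¹| * ∫⁻ z, T.indicator f z :=
        lint_comp_smul_add _ (hf.indicator hT) hc0.ne' v
    _ = ENNReal.ofReal |(c ^ n)⁻¹| * ∫⁻ z in T, f z := by rw [lintegral_indicator hT]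
    _ ≤ 2 ^ n * ∫⁻ z in T, f z := by
        apply mul_le_mul_left
        have h3 : |(c ^ n)⁻¹| = (c ^ n)⁻¹ := abs_of_pos (by positivity)
        have h4 : (c ^ n)⁻¹ ≤ 2 ^ n := by
          rw [← one_div, div_le_iff₀ (by positivity), ← mul_pow]
          calc (1:ℝ) = 1 ^ n := (one_pow n).symm
            _ ≤ (2 * c) ^ n := by
                apply pow_le_pow_left₀ zero_le_one
                linarith
        calc ENNReal.ofReal |(c ^ n)⁻¹| ≤ ENNReal.ofReal ((2:ℝ) ^ n) := by
              rw [h3]; exact ENNReal.ofReal_le_ofReal h4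
          _ = 2 ^ n := by
              rw [ENNReal.ofReal_pow zero_le_two]
              norm_num

lemma jensen_rpow {μ : Measure ℝ} [IsProbabilityMeasure μ] {f : ℝ → ℝ≥0∞}
    (hf : AEMeasurable f μ) {p : ℝ} (hp : 1 ≤ p) :
    (∫⁻ t, f t ∂μ) ^ p ≤ ∫⁻ t, f t ^ p ∂μ := by
  rcases eq_or_lt_of_le hp with h1 | h1
  · simp [← h1]
  have hq : p.HolderConjugate (p / (p - 1)) := Real.HolderConjugate.conjExponent h1
  have hH := ENNReal.lintegral_mul_le_Lp_mul_Lq μ hq hf aemeasurable_const (g := fun _ => 1)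
  simp only [Pi.mul_apply, mul_one, ENNReal.one_rpow, lintegral_const, measure_univ, one_mul,
    ENNReal.rpow_one] at hH
  have h2 : ((∫⁻ t, f t ^ p ∂μ) ^ (1 / p)) ^ p = ∫⁻ t, f t ^ p ∂μ := by
    rw [← ENNReal.rpow_mul, one_div, inv_mul_cancel₀ (by positivity), ENNReal.rpow_one]
  calc (∫⁻ t, f t ∂μ) ^ p ≤ ((∫⁻ t, f t ^ p ∂μ) ^ (1 / p)) ^ p :=
        ENNReal.rpow_le_rpow hH (by positivity)
    _ = _ := h2

lemma ptwise {u : EuclideanSpace ℝ (Fin n) → ℝ} (hu : Differentiable ℝ u) {p : ℝ}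
    (hp : 1 ≤ p) (x y : EuclideanSpace ℝ (Fin n)) :
    ENNReal.ofReal (|u x| ^ p) ≤
      ENNReal.ofReal (2 ^ (p - 1)) *
        (ENNReal.ofReal (‖x - y‖ ^ p) *
            (∫⁻ t in Ioc (0:ℝ) 1, ENNReal.ofReal (‖fderiv ℝ u (y + t • (x - y))‖ ^ p)) +
          ENNReal.ofReal (|u y| ^ p)) := by
  have hp0 : (0:ℝ) ≤ p := le_trans zero_le_one hp
  set v := x - y with hv
  set h : ℝ → ℝ := fun t => ‖fderiv ℝ u (y + t • v)‖ with hh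
  have hline_cont : Continuous (fun t : ℝ => y + t • v) := by continuity
  have hmeash : Measurable h := ((measurable_fderiv ℝ u).comp hline_cont.measurable).norm
  set I := ∫⁻ t in Ioc (0:ℝ) 1, ENNReal.ofReal (h t ^ p) with hIdef
  have one_le_c : (1:ℝ) ≤ 2 ^ (p - 1) := Real.one_le_rpow one_le_two (by linarith)
  show ENNReal.ofReal (|u x| ^ p) ≤
    ENNReal.ofReal (2 ^ (p - 1)) * (ENNReal.ofReal (‖v‖ ^ p) * I + ENNReal.ofReal (|u y| ^ p))
  by_cases hI_top : I = ⊤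
  · by_cases hv0 : v = 0
    · have hxy : x = y := by rwa [sub_eq_zero] at hv0
      calc ENNReal.ofReal (|u x| ^ p) = ENNReal.ofReal (|u y| ^ p) := by rw [hxy]
        _ ≤ ENNReal.ofReal (‖v‖ ^ p) * I + ENNReal.ofReal (|u y| ^ p) := le_add_self
        _ ≤ _ := le_mul_of_one_le_left (by positivity) (by
              rw [show (1:ℝ≥0∞) = ENNReal.ofReal 1 by simp]
              exact ENNReal.ofReal_le_ofReal one_le_c)
    · have hvpos : (0:ℝ) < ‖v‖ ^ p := Real.rpow_pos_of_pos (norm_pos_iff.mpr hv0) p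
      have htop : ENNReal.ofReal (‖v‖ ^ p) * I = ⊤ := by
        rw [hI_top]
        exact ENNReal.mul_top ((ENNReal.ofReal_pos.mpr hvpos).ne')
      rw [htop, top_add, ENNReal.mul_top
        ((ENNReal.ofReal_pos.mpr (lt_of_lt_of_le one_pos one_le_c)).ne')]
      exact le_top
  · -- I finite : FTC argument
    haveI : IsProbabilityMeasure (volume.restrict (Ioc (0:ℝ) 1)) :=
      ⟨by simp [Real.volume_Ioc]⟩
    have hline : ∀ t : ℝ, HasDerivAt (fun s : ℝ => y + s • v) v t := fun t => by
      simpa using ((hasDerivAt_id t).smul_const v).const_add y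
    set g' : ℝ → ℝ := fun t => (fderiv ℝ u (y + t • v)) v with hg'
    have hg'meas : Measurable g' :=
      (measurable_fderiv_apply_const ℝ u v).comp hline_cont.measurable
    have hderiv : ∀ t : ℝ, HasDerivAt (fun s => u (y + s • v)) (g' t) t := fun t =>
      (hu (y + t • v)).hasFDerivAt.comp_hasDerivAt t (hline t)
    have hbound : ∀ t, |g' t| ≤ h t * ‖v‖ := fun t => by
      simpa [Real.norm_eq_abs] using (fderiv ℝ u (y + t • v)).le_opNorm v
    have hint_h : IntegrableOn h (Ioc (0:ℝ) 1) := by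
      refine ⟨hmeash.aestronglyMeasurable, ?_⟩
      rw [hasFiniteIntegral_iff_norm]
      have hptw : ∀ t : ℝ, ENNReal.ofReal ‖h t‖ ≤ 1 + ENNReal.ofReal (h t ^ p) := by
        intro t
        have h0 : 0 ≤ h t := norm_nonneg _
        rcases le_or_gt (h t) 1 with h1 | h1
        · calc ENNReal.ofReal ‖h t‖ ≤ 1 := by
                rw [Real.norm_eq_abs, abs_of_nonneg h0]
                exact ENNReal.ofReal_le_one.mpr h1
            _ ≤ _ := self_le_add_right _ _
        · calc ENNReal.ofReal ‖h t‖ ≤ ENNReal.ofReal (h t ^ p) := by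
                apply ENNReal.ofReal_le_ofReal
                rw [Real.norm_eq_abs, abs_of_nonneg h0]
                calc h t = h t ^ (1:ℝ) := (Real.rpow_one _).symm
                  _ ≤ h t ^ p := Real.rpow_le_rpow_of_exponent_le h1.le hp
            _ ≤ _ := le_add_self
      calc ∫⁻ t in Ioc (0:ℝ) 1, ENNReal.ofReal ‖h t‖
          ≤ ∫⁻ t in Ioc (0:ℝ) 1, (1 + ENNReal.ofReal (h t ^ p)) :=
            lintegral_mono hptw
        _ = 1 + I := by
            rw [lintegral_add_left measurable_const]
            simp [hIdef]
        _ < ⊤ := by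
            rw [ENNReal.add_lt_top]
            exact ⟨ENNReal.one_lt_top, lt_top_iff_ne_top.mpr hI_top⟩
    have hint_hv : IntervalIntegrable (fun t => h t * ‖v‖) volume 0 1 := by
      rw [intervalIntegrable_iff_integrableOn_Ioc_of_le zero_le_one]
      exact hint_h.mul_const _
    have hint_g' : IntervalIntegrable g' volume 0 1 := by
      rw [intervalIntegrable_iff_integrableOn_Ioc_of_le zero_le_one]
      refine (hint_h.mul_const ‖v‖).mono' hg'meas.aestronglyMeasurable ?_
      exact ae_of_all _ fun t => by simpa [Real.norm_eq_abs] using hbound t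
    have hftc : ∫ t in (0:ℝ)..1, g' t = u x - u y := by
      rw [intervalIntegral.integral_eq_sub_of_hasDerivAt (fun t _ => hderiv t) hint_g']
      simp [hv]
    set S : ℝ := ∫ t in (0:ℝ)..1, h t with hSdef
    have hS0 : 0 ≤ S := intervalIntegral.integral_nonneg zero_le_one fun t _ => norm_nonneg _
    have habs : |u x| ≤ |u y| + ‖v‖ * S := by
      have h2 : |u x - u y| ≤ ‖v‖ * S := by
        rw [← hftc]
        calc |∫ t in (0:ℝ)..1, g' t| ≤ ∫ t in (0:ℝ)..1, |g' t| :=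
              intervalIntegral.abs_integral_le_integral_abs zero_le_one
          _ ≤ ∫ t in (0:ℝ)..1, h t * ‖v‖ := by
              apply intervalIntegral.integral_mono_on zero_le_one hint_g'.abs hint_hv
              exact fun t _ => hbound t
          _ = ‖v‖ * S := by rw [intervalIntegral.integral_mul_const]; ring
      calc |u x| = |u y + (u x - u y)| := by ring_nf
        _ ≤ |u y| + |u x - u y| := abs_add_le _ _
        _ ≤ |u y| + ‖v‖ * S := by linarith
    have hSI : ENNReal.ofReal S ^ p ≤ I := by
      have h1 : ENNReal.ofReal S ≤ ∫⁻ t in Ioc (0:ℝ) 1, ENNReal.ofReal (h t) := by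
        rw [hSdef, intervalIntegral.integral_of_le zero_le_one]
        exact (MeasureTheory.ofReal_integral_eq_lintegral_ofReal hint_h
          (ae_of_all _ fun t => norm_nonneg _)).le
      calc ENNReal.ofReal S ^ p ≤ (∫⁻ t in Ioc (0:ℝ) 1, ENNReal.ofReal (h t)) ^ p :=
            ENNReal.rpow_le_rpow h1 hp0
        _ ≤ ∫⁻ t in Ioc (0:ℝ) 1, ENNReal.ofReal (h t) ^ p :=
            jensen_rpow hmeash.ennreal_ofReal.aemeasurable hp
        _ = I := by
            rw [hIdef]
            congr 1
            ext t
            rw [ENNReal.ofReal_rpow_of_nonneg (norm_nonneg _) hp0]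
    calc ENNReal.ofReal (|u x| ^ p)
        ≤ ENNReal.ofReal ((|u y| + ‖v‖ * S) ^ p) :=
          ENNReal.ofReal_le_ofReal
            (Real.rpow_le_rpow (abs_nonneg _) habs hp0)
      _ = (ENNReal.ofReal (|u y|) + ENNReal.ofReal (‖v‖ * S)) ^ p := by
          rw [← ENNReal.ofReal_add (abs_nonneg _) (by positivity),
            ← ENNReal.ofReal_rpow_of_nonneg (by positivity) hp0]
      _ ≤ (2:ℝ≥0∞) ^ (p - 1) *
            (ENNReal.ofReal (|u y|) ^ p + ENNReal.ofReal (‖v‖ * S) ^ p) :=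
          ENNReal.rpow_add_le_mul_rpow_add_rpow _ _ hp
      _ ≤ ENNReal.ofReal (2 ^ (p - 1)) *
            (ENNReal.ofReal (‖v‖ ^ p) * I + ENNReal.ofReal (|u y| ^ p)) := by
          have e1 : (2:ℝ≥0∞) ^ (p - 1) = ENNReal.ofReal (2 ^ (p - 1)) := by
            rw [← ENNReal.ofReal_rpow_of_nonneg zero_le_two (by linarith : (0:ℝ) ≤ p - 1),
              ENNReal.ofReal_ofNat]
          rw [e1]
          apply mul_le_mul_right
          rw [ENNReal.ofReal_rpow_of_nonneg (abs_nonneg _) hp0]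
          have e2 : ENNReal.ofReal (‖v‖ * S) ^ p ≤ ENNReal.ofReal (‖v‖ ^ p) * I := by
            rw [ENNReal.ofReal_rpow_of_nonneg (by positivity) hp0,
              Real.mul_rpow (norm_nonneg _) hS0, ENNReal.ofReal_mul (by positivity)]
            exact mul_le_mul_right
              (by rw [← ENNReal.ofReal_rpow_of_nonneg hS0 hp0]; exact hSI) _
          rw [add_comm]
          exact add_le_add e2 le_rfl

lemma poincare {u : EuclideanSpace ℝ (Fin n) → ℝ} (hu : Differentiable ℝ u) {p : ℝ}
    (hp : 1 ≤ p) (x₀ : EuclideanSpace ℝ (Fin n)) {r : ℝ} (hr : 0 < r)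
    {E : Set (EuclideanSpace ℝ (Fin n))} (hE : MeasurableSet E) (hEB : E ⊆ ball x₀ r) :
    volume E * ∫⁻ z in ball x₀ r, ENNReal.ofReal (|u z| ^ p) ≤
      ENNReal.ofReal (2 ^ (p - 1)) *
        (ENNReal.ofReal ((2 * r) ^ p) *
            (2 ^ (n + 1) * (volume (ball x₀ r) *
              ∫⁻ z in ball x₀ r, ENNReal.ofReal (‖fderiv ℝ u z‖ ^ p))) +
          volume (ball x₀ r) * ∫⁻ z in E, ENNReal.ofReal (|u z| ^ p)) := by
  have hp0 : (0:ℝ) ≤ p := le_trans zero_le_one hp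
  set B := ball x₀ r with hBdef
  have hB : MeasurableSet B := measurableSet_ball
  set g : EuclideanSpace ℝ (Fin n) → ℝ≥0∞ :=
    fun z => ENNReal.ofReal (‖fderiv ℝ u z‖ ^ p) with hgdef
  have hg : Measurable g :=
    ((Real.continuous_rpow_const hp0).measurable.comp
      (measurable_fderiv ℝ u).norm).ennreal_ofReal
  set G := ∫⁻ z in B, g z with hGdef
  set J := ∫⁻ z in B, ENNReal.ofReal (|u z| ^ p) with hJdef
  set of2 := ENNReal.ofReal (2 ^ (p - 1)) with hof2
  set ofK := ENNReal.ofReal ((2 * r) ^ p) with hofK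
  -- measurability helpers
  have mT : ∀ (s : Set ℝ) (y : EuclideanSpace ℝ (Fin n)),
      Measurable fun x => ∫⁻ t in s, g (y + t • (x - y)) := fun s y =>
    Measurable.lintegral_prod_right'
      (hg.comp (by fun_prop : Continuous fun q : EuclideanSpace ℝ (Fin n) × ℝ =>
        y + q.2 • (q.1 - y)).measurable)
  have mW : ∀ (s : Set ℝ), Measurable fun y : EuclideanSpace ℝ (Fin n) =>
      ∫⁻ x in B, ∫⁻ t in s, g (y + t • (x - y)) := fun s =>
    Measurable.lintegral_prod_right'
      (Measurable.lintegral_prod_right'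
        (hg.comp (by fun_prop : Continuous
          fun q : (EuclideanSpace ℝ (Fin n) × EuclideanSpace ℝ (Fin n)) × ℝ =>
            q.1.1 + q.2 • (q.1.2 - q.1.1)).measurable))
  set W : EuclideanSpace ℝ (Fin n) → ℝ≥0∞ :=
    fun y => ∫⁻ x in B, ∫⁻ t in Ioc (0:ℝ) 1, g (y + t • (x - y)) with hWdef
  -- Step 2 : per-y bound
  have step2 : ∀ y ∈ E, J ≤ of2 * (ofK * W y + ENNReal.ofReal (|u y| ^ p) * volume B) := by
    intro y hy
    have hy' : y ∈ B := hEB hy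
    calc J ≤ ∫⁻ x in B, of2 * (ENNReal.ofReal (‖x - y‖ ^ p) *
          (∫⁻ t in Ioc (0:ℝ) 1, g (y + t • (x - y))) + ENNReal.ofReal (|u y| ^ p)) :=
            lintegral_mono fun x => ptwise hu hp x y
      _ ≤ ∫⁻ x in B, of2 * (ofK *
          (∫⁻ t in Ioc (0:ℝ) 1, g (y + t • (x - y))) + ENNReal.ofReal (|u y| ^ p)) := by
            apply setLIntegral_mono' hB
            intro x hx
            apply mul_le_mul_right
            apply add_le_add_left
            apply mul_le_mul_left
            apply ENNReal.ofReal_le_ofReal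
            apply Real.rpow_le_rpow (norm_nonneg _) ?_ hp0
            have h1 : dist x y ≤ dist x x₀ + dist x₀ y := dist_triangle _ _ _
            have h2 : dist x x₀ < r := mem_ball.mp hx
            have h3 : dist x₀ y < r := by rw [dist_comm]; exact mem_ball.mp hy'
            rw [← dist_eq_norm]
            linarith
      _ = of2 * (ofK * W y + ENNReal.ofReal (|u y| ^ p) * volume B) := by
            rw [lintegral_const_mul' _ _ ENNReal.ofReal_ne_top]
            congr 1
            rw [lintegral_add_right _ measurable_const]
            congr 1
            · exact lintegral_const_mul' _ _ ENNReal.ofReal_ne_top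
            · exact setLIntegral_const _ _
  -- step 4 : the triple-integral bound
  have step4 : ∫⁻ y in E, W y ≤ 2 ^ (n + 1) * (volume B * G) := by
    set s₁ : Set ℝ := Ioc (0:ℝ) (1/2) with hs₁
    set s₂ : Set ℝ := Ioc (1/2:ℝ) 1 with hs₂
    have hdisj : Disjoint s₁ s₂ := by
      rw [Set.disjoint_left]
      rintro t ⟨_, h1⟩ ⟨h2, _⟩
      exact absurd h1 (not_le.mpr h2)
    have hsplit : ∀ (y x : EuclideanSpace ℝ (Fin n)),
        (∫⁻ t in Ioc (0:ℝ) 1, g (y + t • (x - y))) =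
          (∫⁻ t in s₁, g (y + t • (x - y))) + ∫⁻ t in s₂, g (y + t • (x - y)) := by
      intro y x
      rw [← Set.Ioc_union_Ioc_eq_Ioc (by norm_num : (0:ℝ) ≤ 1/2)
        (by norm_num : (1/2:ℝ) ≤ 1), lintegral_union measurableSet_Ioc hdisj]
    have hWsum : ∀ y, W y = (∫⁻ x in B, ∫⁻ t in s₁, g (y + t • (x - y))) +
        ∫⁻ x in B, ∫⁻ t in s₂, g (y + t • (x - y)) := by
      intro y
      rw [hWdef]
      simp only [hsplit]
      exact lintegral_add_left (mT s₁ y) _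
    -- branch 2 bound (per y)
    have br2 : ∀ y ∈ E, (∫⁻ x in B, ∫⁻ t in s₂, g (y + t • (x - y))) ≤ 2 ^ n * G := by
      intro y hy
      have hy' : y ∈ B := hEB hy
      have hswap : (∫⁻ x in B, ∫⁻ t in s₂, g (y + t • (x - y))) =
          ∫⁻ t in s₂, ∫⁻ x in B, g (y + t • (x - y)) :=
        lintegral_lintegral_swap
          ((hg.comp (by fun_prop : Continuous fun q : EuclideanSpace ℝ (Fin n) × ℝ =>
            y + q.2 • (q.1 - y)).measurable).aemeasurable)
      rw [hswap]
      have hinner : ∀ t ∈ s₂, (∫⁻ x in B, g (y + t • (x - y))) ≤ 2 ^ n * G := by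
        intro t ht
        have hrw : ∀ x : EuclideanSpace ℝ (Fin n), y + t • (x - y) = t • x + (y - t • y) := by
          intro x; rw [smul_sub]; abel
        calc (∫⁻ x in B, g (y + t • (x - y))) = ∫⁻ x in B, g (t • x + (y - t • y)) := by
              apply lintegral_congr fun x => by rw [hrw]
          _ ≤ 2 ^ n * G := by
              apply lint_shift_bound g hg ht.1.le _ hB hB
              intro z hz
              have h5 : t • z + (y - t • y) = y + t • (z - y) := by rw [smul_sub]; abel
              rw [h5]
              exact (convex_ball x₀ r).add_smul_sub_mem hy' hz
                ⟨le_trans (by norm_num) ht.1.le, ht.2⟩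
      calc (∫⁻ t in s₂, ∫⁻ x in B, g (y + t • (x - y))) ≤ ∫⁻ _ in s₂, 2 ^ n * G :=
            setLIntegral_mono' measurableSet_Ioc hinner
        _ = 2 ^ n * G * volume s₂ := setLIntegral_const _ _
        _ ≤ 2 ^ n * G * 1 := by
            apply mul_le_mul_right
            rw [hs₂, Real.volume_Ioc]
            apply ENNReal.ofReal_le_one.mpr; norm_num
        _ = 2 ^ n * G := mul_one _
    -- branch 1 bound
    have br1 : (∫⁻ y in E, ∫⁻ x in B, ∫⁻ t in s₁, g (y + t • (x - y))) ≤
        volume B * (2 ^ n * G) := by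
      have e1 : (∫⁻ y in E, ∫⁻ x in B, ∫⁻ t in s₁, g (y + t • (x - y))) =
          ∫⁻ y in E, ∫⁻ t in s₁, ∫⁻ x in B, g (y + t • (x - y)) := by
        apply lintegral_congr fun y => ?_
        exact lintegral_lintegral_swap
          ((hg.comp (by fun_prop : Continuous fun q : EuclideanSpace ℝ (Fin n) × ℝ =>
            y + q.2 • (q.1 - y)).measurable).aemeasurable)
      have e2 : (∫⁻ y in E, ∫⁻ t in s₁, ∫⁻ x in B, g (y + t • (x - y))) =
          ∫⁻ t in s₁, ∫⁻ y in E, ∫⁻ x in B, g (y + t • (x - y)) :=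
        lintegral_lintegral_swap
          ((Measurable.lintegral_prod_right'
            (hg.comp (by fun_prop : Continuous
              fun q : (EuclideanSpace ℝ (Fin n) × ℝ) × EuclideanSpace ℝ (Fin n) =>
                q.1.1 + q.1.2 • (q.2 - q.1.1)).measurable)).aemeasurable)
      have e3 : ∀ t : ℝ, (∫⁻ y in E, ∫⁻ x in B, g (y + t • (x - y))) =
          ∫⁻ x in B, ∫⁻ y in E, g (y + t • (x - y)) := fun t =>
        lintegral_lintegral_swap
          ((hg.comp (by fun_prop : Continuous
            fun q : EuclideanSpace ℝ (Fin n) × EuclideanSpace ℝ (Fin n) =>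
              q.1 + t • (q.2 - q.1)).measurable).aemeasurable)
      have hinner : ∀ t ∈ s₁, (∫⁻ x in B, ∫⁻ y in E, g (y + t • (x - y))) ≤
          volume B * (2 ^ n * G) := by
        intro t ht
        have hin2 : ∀ x ∈ B, (∫⁻ y in E, g (y + t • (x - y))) ≤ 2 ^ n * G := by
          intro x hx
          have hrw : ∀ y : EuclideanSpace ℝ (Fin n),
              y + t • (x - y) = (1 - t) • y + t • x := by
            intro y; rw [smul_sub, sub_smul, one_smul]; abel
          calc (∫⁻ y in E, g (y + t • (x - y))) = ∫⁻ y in E, g ((1 - t) • y + t • x) := by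
                apply lintegral_congr fun y => by rw [hrw]
            _ ≤ 2 ^ n * G := by
                apply lint_shift_bound g hg (by linarith [ht.2] : 1/2 ≤ 1 - t) _ hE hB
                intro z hz
                have h5 : (1 - t) • z + t • x = z + t • (x - z) := by
                  rw [smul_sub, sub_smul, one_smul]; abel
                rw [h5]
                exact (convex_ball x₀ r).add_smul_sub_mem (hEB hz) hx ⟨ht.1.le, by linarith [ht.2]⟩
        calc (∫⁻ x in B, ∫⁻ y in E, g (y + t • (x - y))) ≤ ∫⁻ _ in B, 2 ^ n * G :=
              setLIntegral_mono' hB hin2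
          _ = 2 ^ n * G * volume B := setLIntegral_const _ _
          _ = volume B * (2 ^ n * G) := mul_comm _ _
      calc (∫⁻ y in E, ∫⁻ x in B, ∫⁻ t in s₁, g (y + t • (x - y)))
          = ∫⁻ t in s₁, ∫⁻ x in B, ∫⁻ y in E, g (y + t • (x - y)) := by
            rw [e1, e2]; exact lintegral_congr fun t => e3 t
        _ ≤ ∫⁻ _ in s₁, volume B * (2 ^ n * G) := setLIntegral_mono' measurableSet_Ioc hinner
        _ = volume B * (2 ^ n * G) * volume s₁ := setLIntegral_const _ _
        _ ≤ volume B * (2 ^ n * G) * 1 := by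
            apply mul_le_mul_right
            rw [hs₁, Real.volume_Ioc]
            apply ENNReal.ofReal_le_one.mpr; norm_num
        _ = volume B * (2 ^ n * G) := mul_one _
    have br2' : (∫⁻ y in E, ∫⁻ x in B, ∫⁻ t in s₂, g (y + t • (x - y))) ≤
        volume B * (2 ^ n * G) := by
      calc (∫⁻ y in E, ∫⁻ x in B, ∫⁻ t in s₂, g (y + t • (x - y)))
          ≤ ∫⁻ _ in E, 2 ^ n * G := setLIntegral_mono' hE br2
        _ = 2 ^ n * G * volume E := setLIntegral_const _ _
        _ ≤ 2 ^ n * G * volume B := mul_le_mul_right (measure_mono hEB) _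
        _ = volume B * (2 ^ n * G) := mul_comm _ _
    calc ∫⁻ y in E, W y
        = (∫⁻ y in E, ∫⁻ x in B, ∫⁻ t in s₁, g (y + t • (x - y))) +
            ∫⁻ y in E, ∫⁻ x in B, ∫⁻ t in s₂, g (y + t • (x - y)) := by
          simp only [hWsum]
          exact lintegral_add_left (mW s₁) _
      _ ≤ volume B * (2 ^ n * G) + volume B * (2 ^ n * G) := add_le_add br1 br2'
      _ = 2 ^ (n + 1) * (volume B * G) := by rw [pow_succ]; ring
  -- assemble
  calc volume E * J = ∫⁻ _ in E, J := by rw [setLIntegral_const, mul_comm]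
    _ ≤ ∫⁻ y in E, of2 * (ofK * W y + ENNReal.ofReal (|u y| ^ p) * volume B) :=
        setLIntegral_mono' hE step2
    _ = of2 * (ofK * (∫⁻ y in E, W y) + volume B * ∫⁻ y in E, ENNReal.ofReal (|u y| ^ p)) := by
        rw [lintegral_const_mul' _ _ ENNReal.ofReal_ne_top]
        congr 1
        rw [lintegral_add_left ((mW _).const_mul _)]
        congr 1
        · exact lintegral_const_mul' _ _ ENNReal.ofReal_ne_top
        · rw [lintegral_mul_const' _ _ measure_ball_lt_top.ne, mul_comm]
    _ ≤ of2 * (ofK * (2 ^ (n + 1) * (volume B * G)) +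
          volume B * ∫⁻ y in E, ENNReal.ofReal (|u y| ^ p)) := by
        apply mul_le_mul_right
        apply add_le_add_left
        exact mul_le_mul_right step4 _

/-- Euclidean Fefferman-type "Main Lemma" for `A_∞` weights. -/
theorem stmt15 (n : ℕ) (p : ℝ) (hp : 1 ≤ p) (α : ℝ) (hα : α ∈ Set.Ioo (0:ℝ) 1) :
    ∃ C > (0:ℝ), ∀ (x₀ : EuclideanSpace ℝ (Fin n)) (r : ℝ), 0 < r → r ≤ 1 →
      ∀ w : EuclideanSpace ℝ (Fin n) → ℝ, IsAinfty n α w →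
        (r ^ (-p) ≤ (volume (ball x₀ r)).toReal⁻¹ * ∫ y in ball x₀ r, w y) →
        ∀ u : EuclideanSpace ℝ (Fin n) → ℝ, Differentiable ℝ u →
          IntegrableOn (fun x => |u x| ^ p) (ball x₀ r) →
          IntegrableOn (fun x => ‖fderiv ℝ u x‖ ^ p) (ball x₀ r) →
          IntegrableOn (fun x => w x * |u x| ^ p) (ball x₀ r) →
          C * r ^ (-p) * ∫ x in ball x₀ r, |u x| ^ p ≤
            ∫ x in ball x₀ r, (‖fderiv ℝ u x‖ ^ p + w x * |u x| ^ p) := by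
  obtain ⟨hα0, hα1⟩ := hα
  have hp0 : (0:ℝ) ≤ p := le_trans zero_le_one hp
  have h2p : (0:ℝ) < 2 ^ p := Real.rpow_pos_of_pos two_pos p
  have h2p1 : (0:ℝ) < 2 ^ (p - 1) := Real.rpow_pos_of_pos two_pos _
  set K : ℝ := 2 ^ (p - 1) * ((2:ℝ) ^ p * 2 ^ (n + 1)) with hK
  have hK0 : 0 < K := by positivity
  set c₁ : ℝ := α * (α / 2 ^ p) with hc₁
  set c₂ : ℝ := α / (2 * K) with hc₂
  have hc₁0 : 0 < c₁ := by positivity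
  have hc₂0 : 0 < c₂ := by positivity
  refine ⟨min c₁ c₂, lt_min hc₁0 hc₂0, ?_⟩
  intro x₀ r hr hr1 w hw hwavg u hu hint_u hint_du hint_wu
  set B := ball x₀ r with hBdef
  have hB : MeasurableSet B := measurableSet_ball
  have hvB0 : 0 < volume B := measure_ball_pos _ _ hr
  have hvBt : volume B ≠ ⊤ := measure_ball_lt_top.ne
  set vBR := (volume B).toReal with hvBR
  have hvBR0 : 0 < vBR := ENNReal.toReal_pos hvB0.ne' hvBt
  set A := ∫ x in B, |u x| ^ p with hA
  have hA0 : 0 ≤ A :=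
    setIntegral_nonneg hB fun x _ => Real.rpow_nonneg (abs_nonneg _) p
  set D := ∫ x in B, ‖fderiv ℝ u x‖ ^ p with hD
  have hD0 : 0 ≤ D :=
    setIntegral_nonneg hB fun x _ => Real.rpow_nonneg (norm_nonneg _) p
  set WI := ∫ x in B, w x * |u x| ^ p with hWI
  have hw_ae : ∀ᵐ x ∂(volume : Measure (EuclideanSpace ℝ (Fin n))), 0 < w x := hw.2.1
  have hWI0 : 0 ≤ WI := by
    apply integral_nonneg_of_ae
    filter_upwards [ae_restrict_of_ae hw_ae] with x hx
    exact mul_nonneg hx.le (Real.rpow_nonneg (abs_nonneg _) p)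
  have hRHS : ∫ x in B, (‖fderiv ℝ u x‖ ^ p + w x * |u x| ^ p) = D + WI :=
    integral_add hint_du hint_wu
  rw [hRHS]
  have hrp : (0:ℝ) < r ^ p := Real.rpow_pos_of_pos hr p
  have hrnegp : (0:ℝ) < r ^ (-p) := Real.rpow_pos_of_pos hr _
  have hrinv : r ^ (-p) = (r ^ p)⁻¹ := Real.rpow_neg hr.le p
  have hWbound : r ^ (-p) * vBR ≤ ∫ y in B, w y := by
    have h1 := mul_le_mul_of_nonneg_right hwavg hvBR0.le
    calc r ^ (-p) * vBR ≤ vBR⁻¹ * (∫ y in B, w y) * vBR := h1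
      _ = ∫ y in B, w y := by field_simp
  set lam : ℝ := α / 2 ^ p with hlam
  have hlam0 : 0 < lam := by positivity
  set Aavg := A / vBR with hAavg
  have hAavg0 : 0 ≤ Aavg := div_nonneg hA0 hvBR0.le
  set F : Set (EuclideanSpace ℝ (Fin n)) := {y ∈ B | lam * Aavg < |u y| ^ p} with hF
  have hcont : Continuous fun y : EuclideanSpace ℝ (Fin n) => |u y| ^ p :=
    (Real.continuous_rpow_const hp0).comp hu.continuous.abs
  have hFm : MeasurableSet F := by
    have : F = B ∩ (fun y => |u y| ^ p) ⁻¹' Ioi (lam * Aavg) := by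
      ext y; simp [hF, mem_sep_iff]
    rw [this]
    exact hB.inter (hcont.measurable measurableSet_Ioi)
  have hFB : F ⊆ B := fun y hy => hy.1
  set Ee : Set (EuclideanSpace ℝ (Fin n)) := B \ F with hEe
  have hEem : MeasurableSet Ee := hB.diff hFm
  have hEeB : Ee ⊆ B := diff_subset
  have hEe_small : ∀ y ∈ Ee, |u y| ^ p ≤ lam * Aavg := by
    intro y hy
    by_contra hcon
    exact hy.2 ⟨hy.1, not_le.mp hcon⟩
  by_cases hcase : ENNReal.ofReal (1 - α) * volume B ≤ volume F
  · -- Case 1 : big level set, weight term dominates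
    have hAinf := hw.2.2 x₀ r hr F hFB hFm hcase
    have hwB_int : IntegrableOn w B :=
      (hw.1.integrableOn_isCompact (isCompact_closedBall x₀ r)).mono_set
        ball_subset_closedBall
    have hwF_int : IntegrableOn w F := hwB_int.mono_set hFB
    have hwuF_int : IntegrableOn (fun y => w y * |u y| ^ p) F := hint_wu.mono_set hFB
    have h1 : lam * Aavg * ∫ y in F, w y ≤ ∫ y in F, w y * |u y| ^ p := by
      rw [← integral_const_mul]
      apply integral_mono_ae (hwF_int.const_mul _) hwuF_int
      filter_upwards [ae_restrict_of_ae hw_ae, ae_restrict_mem hFm] with y hwy hyF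
      calc lam * Aavg * w y ≤ |u y| ^ p * w y :=
            mul_le_mul_of_nonneg_right hyF.2.le hwy.le
        _ = w y * |u y| ^ p := mul_comm _ _
    have h2 : ∫ y in F, w y * |u y| ^ p ≤ WI := by
      apply setIntegral_mono_set hint_wu ?_ (HasSubset.Subset.eventuallyLE hFB)
      filter_upwards [ae_restrict_of_ae hw_ae] with y hwy
      exact mul_nonneg hwy.le (Real.rpow_nonneg (abs_nonneg _) p)
    have h3 : (0:ℝ) ≤ ∫ y in B, w y :=
      le_trans (by positivity) hWbound
    have h4 : lam * Aavg * (α * ∫ y in B, w y) ≤ lam * Aavg * ∫ y in F, w y :=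
      mul_le_mul_of_nonneg_left hAinf (by positivity)
    have h5 : lam * Aavg * (α * (r ^ (-p) * vBR)) ≤ lam * Aavg * (α * ∫ y in B, w y) := by
      apply mul_le_mul_of_nonneg_left _ (by positivity)
      exact mul_le_mul_of_nonneg_left hWbound hα0.le
    have hkey : c₁ * r ^ (-p) * A ≤ WI := by
      have e1 : lam * Aavg * (α * (r ^ (-p) * vBR)) = c₁ * r ^ (-p) * A := by
        rw [hc₁, hlam, hAavg]
        field_simp
      rw [← e1]
      linarith
    calc min c₁ c₂ * r ^ (-p) * A ≤ c₁ * r ^ (-p) * A := by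
          apply mul_le_mul_of_nonneg_right _ hA0
          exact mul_le_mul_of_nonneg_right (min_le_left _ _) hrnegp.le
      _ ≤ WI := hkey
      _ ≤ D + WI := le_add_of_nonneg_left hD0
  · -- Case 2 : gradient term dominates via Poincaré
    rw [not_le] at hcase
    have hvolF_ne : volume F ≠ ⊤ :=
      (lt_of_le_of_lt (measure_mono hFB) measure_ball_lt_top).ne
    have hsum : volume B = ENNReal.ofReal α * volume B + ENNReal.ofReal (1 - α) * volume B := by
      rw [← add_mul, ← ENNReal.ofReal_add hα0.le (by linarith)]
      norm_num
    have hvol_Ee : ENNReal.ofReal α * volume B ≤ volume Ee := by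
      have hEe_vol : volume Ee = volume B - volume F :=
        measure_diff hFB hFm.nullMeasurableSet hvolF_ne
      rw [hEe_vol]
      calc ENNReal.ofReal α * volume B
          = volume B - ENNReal.ofReal (1 - α) * volume B :=
            (ENNReal.sub_eq_of_eq_add
              (ENNReal.mul_ne_top ENNReal.ofReal_ne_top hvBt) hsum).symm
        _ ≤ volume B - volume F := tsub_le_tsub_left hcase.le _
    have hJ : (∫⁻ z in B, ENNReal.ofReal (|u z| ^ p)) = ENNReal.ofReal A :=
      (MeasureTheory.ofReal_integral_eq_lintegral_ofReal hint_u
        (ae_of_all _ fun x => Real.rpow_nonneg (abs_nonneg _) p)).symm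
    have hG : (∫⁻ z in B, ENNReal.ofReal (‖fderiv ℝ u z‖ ^ p)) = ENNReal.ofReal D :=
      (MeasureTheory.ofReal_integral_eq_lintegral_ofReal hint_du
        (ae_of_all _ fun x => Real.rpow_nonneg (norm_nonneg _) p)).symm
    have hEe_int : (∫⁻ z in Ee, ENNReal.ofReal (|u z| ^ p)) ≤
        ENNReal.ofReal (lam * Aavg) * volume B := by
      calc (∫⁻ z in Ee, ENNReal.ofReal (|u z| ^ p))
          ≤ ∫⁻ _ in Ee, ENNReal.ofReal (lam * Aavg) :=
            setLIntegral_mono' hEem fun y hy => ENNReal.ofReal_le_ofReal (hEe_small y hy)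
        _ = ENNReal.ofReal (lam * Aavg) * volume Ee := setLIntegral_const _ _
        _ ≤ _ := mul_le_mul_right (measure_mono hEeB) _
    have hP := poincare hu hp x₀ hr hEem hEeB
    rw [hJ, hG] at hP
    have chain : ENNReal.ofReal α * volume B * ENNReal.ofReal A ≤
        ENNReal.ofReal (2 ^ (p - 1)) *
          (ENNReal.ofReal ((2 * r) ^ p) * (2 ^ (n + 1) * (volume B * ENNReal.ofReal D)) +
            volume B * (ENNReal.ofReal (lam * Aavg) * volume B)) := by
      calc ENNReal.ofReal α * volume B * ENNReal.ofReal A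
          ≤ volume Ee * ENNReal.ofReal A := mul_le_mul_left hvol_Ee _
        _ ≤ ENNReal.ofReal (2 ^ (p - 1)) *
              (ENNReal.ofReal ((2 * r) ^ p) * (2 ^ (n + 1) * (volume B * ENNReal.ofReal D)) +
                volume B * ∫⁻ z in Ee, ENNReal.ofReal (|u z| ^ p)) := hP
        _ ≤ _ := by
            apply mul_le_mul_right
            apply add_le_add_right
            exact mul_le_mul_right hEe_int _
    have hvolB_eq : volume B = ENNReal.ofReal vBR := (ENNReal.ofReal_toReal hvBt).symm
    have h2n : (2:ℝ≥0∞) ^ (n + 1) = ENNReal.ofReal ((2:ℝ) ^ (n + 1)) := by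
      rw [ENNReal.ofReal_pow zero_le_two, ENNReal.ofReal_ofNat]
    have h2rp0 : (0:ℝ) ≤ (2 * r) ^ p := Real.rpow_nonneg (by linarith) p
    rw [hvolB_eq, h2n, ← ENNReal.ofReal_mul hα0.le,
      ← ENNReal.ofReal_mul (by positivity),
      ← ENNReal.ofReal_mul hvBR0.le,
      ← ENNReal.ofReal_mul (by positivity : (0:ℝ) ≤ (2:ℝ) ^ (n + 1)),
      ← ENNReal.ofReal_mul h2rp0,
      ← ENNReal.ofReal_mul (mul_nonneg hlam0.le hAavg0),
      ← ENNReal.ofReal_mul hvBR0.le,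
      ← ENNReal.ofReal_add (by positivity) (by positivity),
      ← ENNReal.ofReal_mul h2p1.le] at chain
    have Hreal : α * vBR * A ≤
        2 ^ (p - 1) * ((2 * r) ^ p * ((2:ℝ) ^ (n + 1) * (vBR * D)) +
          vBR * (lam * Aavg * vBR)) :=
      (ENNReal.ofReal_le_ofReal_iff (by positivity)).mp chain
    have hAavg_simp : lam * Aavg * vBR = lam * A := by
      rw [hAavg]; field_simp
    rw [hAavg_simp] at Hreal
    have hhalf : 2 ^ (p - 1) * lam = α / 2 := by
      rw [hlam, Real.rpow_sub two_pos, Real.rpow_one]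
      field_simp
    have h2r : (2 * r) ^ p = 2 ^ p * r ^ p := Real.mul_rpow zero_le_two hr.le
    have H2 : α * A ≤ K * (r ^ p * D) + (α / 2) * A := by
      have e2 : 2 ^ (p - 1) * ((2 * r) ^ p * ((2:ℝ) ^ (n + 1) * (vBR * D)) + vBR * (lam * A)) =
          vBR * (K * (r ^ p * D) + (α / 2) * A) := by
        rw [h2r, hK, ← hhalf]; ring
      rw [e2] at Hreal
      have : vBR * (α * A) ≤ vBR * (K * (r ^ p * D) + (α / 2) * A) := by
        calc vBR * (α * A) = α * vBR * A := by ring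
          _ ≤ _ := Hreal
      exact le_of_mul_le_mul_left this hvBR0
    have H3 : (α / 2) * A ≤ K * (r ^ p * D) := by linarith
    have h6 : c₂ * A ≤ r ^ p * D := by
      rw [hc₂, div_mul_eq_mul_div, div_le_iff₀ (by positivity : (0:ℝ) < 2 * K)]
      calc α * A = 2 * ((α / 2) * A) := by ring
        _ ≤ 2 * (K * (r ^ p * D)) := by linarith
        _ = r ^ p * D * (2 * K) := by ring
    have hkey : c₂ * r ^ (-p) * A ≤ D := by
      calc c₂ * r ^ (-p) * A = c₂ * A * (r ^ p)⁻¹ := by rw [hrinv]; ring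
        _ ≤ r ^ p * D * (r ^ p)⁻¹ := mul_le_mul_of_nonneg_right h6 (by positivity)
        _ = D := by field_simp
    calc min c₁ c₂ * r ^ (-p) * A ≤ c₂ * r ^ (-p) * A := by
          apply mul_le_mul_of_nonneg_right _ hA0
          exact mul_le_mul_of_nonneg_right (min_le_right _ _) hrnegp.le
      _ ≤ D := hkey
      _ ≤ D + WI := le_add_of_nonneg_right hWI0
end

section
/- Let $a\in A^\alpha_\infty(\mathbb{R}^{2d})$ and define $\lambda(a,h)=\inf_B \frac{1}{|B|}\int_B a$, the infimum over balls $B$ of radius $h^{1/2}$. Then there exist constants $M_1,M_2,\kappa_1,\kappa_2>0$ depending only on $\alpha$ and $d$ such that for $0<h'\leq h$: $M_1 (h/h')^{-\kappa_1}\lambda(a,h)\leq \lambda(a,h')\leq M_2 (h/h')^{\kappa_2}\lambda(a,h)$. In particular, $\lambda(a,h)$ is finite and positive for some $h>0$ if and only if it is so for all $h>0$. -/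
open MeasureTheory Metric Set
open scoped ENNReal

/-- `λ(a,h)`: the infimum of the averages of `a` over balls of radius `h^{1/2}`. -/
noncomputable def lam (d : ℕ) (a : EuclideanSpace ℝ (Fin (2 * d)) → ℝ) (h : ℝ) : ℝ :=
  ⨅ z₀ : EuclideanSpace ℝ (Fin (2 * d)),
    (volume (ball z₀ (Real.sqrt h))).toReal⁻¹ * ∫ z in ball z₀ (Real.sqrt h), a z

namespace Stmt16Aux

/-- The dilation constant used in the doubling argument. -/
noncomputable def cst (n : ℕ) (α : ℝ) : ℝ :=
  if n = 0 then 2 else ((1 - α)⁻¹) ^ ((n : ℝ)⁻¹)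

lemma one_lt_cst {n : ℕ} {α : ℝ} (hα : α ∈ Set.Ioo (0:ℝ) 1) : 1 < cst n α := by
  obtain ⟨h0, h1⟩ := hα
  unfold cst
  split
  · norm_num
  · rename_i hn
    have h1a : (0:ℝ) < 1 - α := by linarith
    rw [Real.one_lt_rpow_iff_of_pos (inv_pos.2 h1a)]
    left
    refine ⟨(one_lt_inv₀ h1a).2 (by linarith), ?_⟩
    have : (0:ℝ) < n := by exact_mod_cast Nat.pos_of_ne_zero hn
    positivity

lemma ball_eq_univ_of_subsingleton {X : Type*} [PseudoMetricSpace X] [Subsingleton X]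
    {x : X} {r : ℝ} (hr : 0 < r) : ball x r = univ := by
  apply eq_univ_of_forall
  intro y
  simp [mem_ball, Subsingleton.elim y x, hr]

lemma vol_ball (n : ℕ) (x : EuclideanSpace ℝ (Fin n)) {r : ℝ} (hr : 0 < r) :
    volume (ball x r)
      = ENNReal.ofReal (r ^ n) * volume (ball (0 : EuclideanSpace ℝ (Fin n)) 1) := by
  rcases Nat.eq_zero_or_pos n with hn | hn
  · subst hn
    rw [ball_eq_univ_of_subsingleton hr, ball_eq_univ_of_subsingleton one_pos,
      pow_zero, ENNReal.ofReal_one, one_mul]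
  · haveI : Nontrivial (EuclideanSpace ℝ (Fin n)) :=
      Module.nontrivial_of_finrank_pos (R := ℝ)
        (by rw [finrank_euclideanSpace_fin]; exact hn)
    rw [Measure.addHaar_ball volume x hr.le, finrank_euclideanSpace_fin]

lemma doubling {n : ℕ} {α : ℝ} (hα : α ∈ Set.Ioo (0:ℝ) 1)
    {a : EuclideanSpace ℝ (Fin n) → ℝ} (ha : IsAinfty n α a)
    (x : EuclideanSpace ℝ (Fin n)) {r : ℝ} (hr : 0 < r) :
    α * ∫ z in ball x (cst n α * r), a z ≤ ∫ z in ball x r, a z := by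
  obtain ⟨h0, h1⟩ := hα
  have hc1 : 1 < cst n α := one_lt_cst ⟨h0, h1⟩
  have hcr : 0 < cst n α * r := by positivity
  refine ha.2.2 x (cst n α * r) hcr (ball x r)
    (ball_subset_ball (by nlinarith)) measurableSet_ball ?_
  rw [vol_ball n x hcr, vol_ball n x hr]
  rcases Nat.eq_zero_or_pos n with hn | hn
  · subst hn
    simp only [pow_zero, ENNReal.ofReal_one, one_mul]
    calc ENNReal.ofReal (1 - α) * volume (ball (0 : EuclideanSpace ℝ (Fin 0)) 1)
        ≤ 1 * volume (ball (0 : EuclideanSpace ℝ (Fin 0)) 1) :=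
          mul_le_mul_left (ENNReal.ofReal_le_one.2 (by linarith)) _
      _ = volume (ball (0 : EuclideanSpace ℝ (Fin 0)) 1) := one_mul _
  · apply le_of_eq
    rw [← mul_assoc, ← ENNReal.ofReal_mul (by linarith)]
    congr 1
    have hcn : cst n α ^ n = (1 - α)⁻¹ := by
      unfold cst
      rw [if_neg hn.ne']
      rw [← Real.rpow_natCast (((1 - α)⁻¹) ^ ((n : ℝ)⁻¹)) n,
        ← Real.rpow_mul (inv_nonneg.2 (by linarith : (0:ℝ) ≤ 1 - α)),
        inv_mul_cancel₀ (by exact_mod_cast hn.ne'), Real.rpow_one]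
    rw [mul_pow, hcn, ← mul_assoc, mul_inv_cancel₀ (by linarith), one_mul]

lemma iter {n : ℕ} {α : ℝ} (hα : α ∈ Set.Ioo (0:ℝ) 1)
    {a : EuclideanSpace ℝ (Fin n) → ℝ} (ha : IsAinfty n α a)
    (x : EuclideanSpace ℝ (Fin n)) {r : ℝ} (hr : 0 < r) (k : ℕ) :
    ∫ z in ball x (cst n α ^ k * r), a z ≤ (α⁻¹) ^ k * ∫ z in ball x r, a z := by
  induction k with
  | zero => simp
  | succ k ih =>
    have h0 := hα.1
    have hc1 : 1 < cst n α := one_lt_cst hα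
    have hrk : 0 < cst n α ^ k * r := by positivity
    have h1 := doubling hα ha x hrk
    have hkey : α * ∫ z in ball x (cst n α ^ (k+1) * r), a z
        ≤ (α⁻¹) ^ k * ∫ z in ball x r, a z := by
      have heq : cst n α ^ (k+1) * r = cst n α * (cst n α ^ k * r) := by ring
      rw [heq]
      exact h1.trans ih
    calc ∫ z in ball x (cst n α ^ (k+1) * r), a z
        = α⁻¹ * (α * ∫ z in ball x (cst n α ^ (k+1) * r), a z) := by
          field_simp
      _ ≤ α⁻¹ * ((α⁻¹) ^ k * ∫ z in ball x r, a z) := by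
          apply mul_le_mul_of_nonneg_left hkey (by positivity)
      _ = (α⁻¹) ^ (k+1) * ∫ z in ball x r, a z := by ring

end Stmt16Aux

open Stmt16Aux in
/-- comparison of `λ(a,h)` at different scales for `A_∞` symbols. -/
theorem stmt16 (d : ℕ) (α : ℝ) (hα : α ∈ Set.Ioo (0:ℝ) 1) :
    ∃ M₁ > (0:ℝ), ∃ M₂ > (0:ℝ), ∃ κ₁ > (0:ℝ), ∃ κ₂ > (0:ℝ),
      ∀ a : EuclideanSpace ℝ (Fin (2 * d)) → ℝ, IsAinfty (2 * d) α a →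
        ∀ h h' : ℝ, 0 < h' → h' ≤ h →
          M₁ * (h / h') ^ (-κ₁) * lam d a h ≤ lam d a h' ∧
          lam d a h' ≤ M₂ * (h / h') ^ κ₂ * lam d a h := by
  obtain ⟨hα0, hα1⟩ := hα
  set n := 2 * d with hn
  set c := cst n α with hcdef
  have hc1 : 1 < c := one_lt_cst ⟨hα0, hα1⟩
  have hc0 : 0 < c := by linarith
  have hαinv : 1 < α⁻¹ := (one_lt_inv₀ hα0).2 hα1
  have hL : 0 < Real.logb c α⁻¹ := Real.logb_pos hc1 hαinv
  refine ⟨α, hα0, 1, one_pos, Real.logb c α⁻¹ / 2, by positivity, (d : ℝ) + 1, by positivity,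
    ?_⟩
  intro a ha h h' hh' hle
  have hh : 0 < h := lt_of_lt_of_le hh' hle
  set s := Real.sqrt h with hs_def
  set s' := Real.sqrt h' with hs'_def
  have hs' : 0 < s' := Real.sqrt_pos.2 hh'
  have hs : 0 < s := Real.sqrt_pos.2 hh
  have hss : s' ≤ s := Real.sqrt_le_sqrt hle
  set q := h / h' with hq_def
  have hq1 : 1 ≤ q := (one_le_div hh').2 hle
  have hq0 : 0 < q := by linarith
  set t := s / s' with ht_def
  have ht : t = Real.sqrt q := by rw [ht_def, hq_def, Real.sqrt_div hh.le]
  have ht1 : 1 ≤ t := by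
    rw [ht]
    exact Real.one_le_sqrt.2 hq1
  have ht0 : 0 < t := by linarith
  have htq : t = q ^ ((2:ℝ)⁻¹) := by
    rw [ht, Real.sqrt_eq_rpow]
    norm_num
  -- basic facts about a
  have h0a : 0 ≤ᵐ[volume] a := ha.2.1.mono fun x hx => hx.le
  have hint : ∀ (z₀ : EuclideanSpace ℝ (Fin n)) (r : ℝ), IntegrableOn a (ball z₀ r) volume :=
    fun z₀ r => (ha.1.integrableOn_isCompact (isCompact_closedBall z₀ r)).mono_set
      ball_subset_closedBall
  have hInn : ∀ (z₀ : EuclideanSpace ℝ (Fin n)) (r : ℝ), 0 ≤ ∫ z in ball z₀ r, a z :=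
    fun z₀ r => setIntegral_nonneg_of_ae h0a
  -- volume facts
  set V₀ := (volume (ball (0 : EuclideanSpace ℝ (Fin n)) 1)).toReal with hV₀def
  have hV₀ : 0 < V₀ :=
    ENNReal.toReal_pos (measure_ball_pos volume _ one_pos).ne' measure_ball_lt_top.ne
  have hvol : ∀ (z₀ : EuclideanSpace ℝ (Fin n)) {r : ℝ}, 0 < r →
      (volume (ball z₀ r)).toReal = r ^ n * V₀ := by
    intro z₀ r hr
    rw [vol_ball n z₀ hr, ENNReal.toReal_mul, ENNReal.toReal_ofReal (by positivity)]
  -- the average function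
  set avg : ℝ → EuclideanSpace ℝ (Fin n) → ℝ := fun r z₀ =>
    (volume (ball z₀ (Real.sqrt r))).toReal⁻¹ * ∫ z in ball z₀ (Real.sqrt r), a z with havg_def
  have hlam : ∀ r : ℝ, lam d a r = ⨅ z₀, avg r z₀ := fun r => rfl
  have havg0 : ∀ (r : ℝ) (z₀ : EuclideanSpace ℝ (Fin n)), 0 ≤ avg r z₀ := by
    intro r z₀
    exact mul_nonneg (inv_nonneg.2 ENNReal.toReal_nonneg) (hInn z₀ _)
  have hbdd : ∀ r : ℝ, BddBelow (Set.range (avg r)) := by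
    intro r
    refine ⟨0, ?_⟩
    rintro x ⟨z₀, rfl⟩
    exact havg0 r z₀
  have hlam0 : ∀ r : ℝ, 0 ≤ lam d a r := by
    intro r
    rw [hlam]
    exact Real.iInf_nonneg (havg0 r)
  -- explicit forms of averages
  have havg_h : ∀ z₀, avg h z₀ = (s ^ n * V₀)⁻¹ * ∫ z in ball z₀ s, a z := by
    intro z₀
    rw [havg_def]
    simp only [← hs_def]
    rw [hvol z₀ hs]
  have havg_h' : ∀ z₀, avg h' z₀ = (s' ^ n * V₀)⁻¹ * ∫ z in ball z₀ s', a z := by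
    intro z₀
    rw [havg_def]
    simp only [← hs'_def]
    rw [hvol z₀ hs']
  -- choice of k
  set k := ⌈Real.logb c t⌉₊ with hk_def
  have hlogb0 : 0 ≤ Real.logb c t := Real.logb_nonneg hc1 ht1
  have hck : t ≤ c ^ k := by
    calc t = c ^ Real.logb c t := (Real.rpow_logb hc0 hc1.ne' ht0).symm
      _ ≤ c ^ ((k : ℝ)) := Real.rpow_le_rpow_of_exponent_le hc1.le (Nat.le_ceil _)
      _ = c ^ k := Real.rpow_natCast c k
  have hsk : s ≤ c ^ k * s' := by
    rw [ht_def] at hck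
    calc s = s / s' * s' := by field_simp
      _ ≤ c ^ k * s' := by
        apply mul_le_mul_of_nonneg_right hck hs'.le
  -- integral comparisons
  have hI1 : ∀ z₀, (∫ z in ball z₀ s', a z) ≤ ∫ z in ball z₀ s, a z := by
    intro z₀
    exact setIntegral_mono_set (hint z₀ s) (ae_restrict_of_ae h0a)
      ((ball_subset_ball hss).eventuallyLE)
  have hI2 : ∀ z₀, (∫ z in ball z₀ s, a z) ≤ (α⁻¹) ^ k * ∫ z in ball z₀ s', a z := by
    intro z₀
    calc (∫ z in ball z₀ s, a z) ≤ ∫ z in ball z₀ (c ^ k * s'), a z :=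
          setIntegral_mono_set (hint z₀ _) (ae_restrict_of_ae h0a)
            ((ball_subset_ball hsk).eventuallyLE)
      _ ≤ (α⁻¹) ^ k * ∫ z in ball z₀ s', a z := iter ⟨hα0, hα1⟩ ha z₀ hs' k
  have hI2' : ∀ z₀, α ^ k * ∫ z in ball z₀ s, a z ≤ ∫ z in ball z₀ s', a z := by
    intro z₀
    have := mul_le_mul_of_nonneg_left (hI2 z₀) (show (0:ℝ) ≤ α ^ k by positivity)
    calc α ^ k * ∫ z in ball z₀ s, a z
        ≤ α ^ k * ((α⁻¹) ^ k * ∫ z in ball z₀ s', a z) := this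
      _ = ∫ z in ball z₀ s', a z := by
          rw [← mul_assoc, ← mul_pow, mul_inv_cancel₀ hα0.ne', one_pow, one_mul]
  -- key comparison of averages (lower)
  have havg_lower : ∀ z₀, α ^ k * avg h z₀ ≤ avg h' z₀ := by
    intro z₀
    rw [havg_h, havg_h']
    have hfac : (s ^ n * V₀)⁻¹ ≤ (s' ^ n * V₀)⁻¹ := by
      apply inv_anti₀ (by positivity)
      have : s' ^ n ≤ s ^ n := pow_le_pow_left₀ hs'.le hss n
      nlinarith
    calc α ^ k * ((s ^ n * V₀)⁻¹ * ∫ z in ball z₀ s, a z)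
        = (s ^ n * V₀)⁻¹ * (α ^ k * ∫ z in ball z₀ s, a z) := by ring
      _ ≤ (s ^ n * V₀)⁻¹ * ∫ z in ball z₀ s', a z :=
          mul_le_mul_of_nonneg_left (hI2' z₀) (by positivity)
      _ ≤ (s' ^ n * V₀)⁻¹ * ∫ z in ball z₀ s', a z :=
          mul_le_mul_of_nonneg_right hfac (hInn z₀ s')
  -- key comparison of averages (upper)
  have htn : t ^ n = q ^ ((d : ℝ)) := by
    rw [htq, ← Real.rpow_natCast (q ^ ((2:ℝ)⁻¹)) n, ← Real.rpow_mul hq0.le]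
    congr 1
    rw [hn]
    push_cast
    ring
  have havg_upper : ∀ z₀, avg h' z₀ ≤ t ^ n * avg h z₀ := by
    intro z₀
    rw [havg_h, havg_h']
    have hfac : (s' ^ n * V₀)⁻¹ = t ^ n * (s ^ n * V₀)⁻¹ := by
      rw [ht_def, div_pow]
      field_simp
    calc (s' ^ n * V₀)⁻¹ * ∫ z in ball z₀ s', a z
        ≤ (s' ^ n * V₀)⁻¹ * ∫ z in ball z₀ s, a z :=
          mul_le_mul_of_nonneg_left (hI1 z₀) (by positivity)
      _ = t ^ n * ((s ^ n * V₀)⁻¹ * ∫ z in ball z₀ s, a z) := by rw [hfac]; ring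
  -- bound α ^ k from below
  have hαk : α * q ^ (-(Real.logb c α⁻¹ / 2)) ≤ α ^ k := by
    have hk_le : (k : ℝ) ≤ Real.logb c t + 1 := (Nat.ceil_lt_add_one hlogb0).le
    have h1 : α ^ (Real.logb c t + 1) ≤ α ^ ((k : ℝ)) :=
      Real.rpow_le_rpow_of_exponent_ge hα0 hα1.le hk_le
    have h2 : α ^ ((k : ℝ)) = α ^ k := Real.rpow_natCast α k
    have h3 : α ^ (Real.logb c t + 1) = α * α ^ (Real.logb c t) := by
      rw [Real.rpow_add hα0, Real.rpow_one]
      ring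
    have h4 : α ^ (Real.logb c t) = t ^ (Real.logb c α) := by
      rw [Real.rpow_def_of_pos hα0, Real.rpow_def_of_pos ht0, Real.logb, Real.logb]
      ring_nf
    have h5 : Real.logb c α = -(Real.logb c α⁻¹) := by
      rw [Real.logb_inv]
      ring
    have h6 : t ^ (-(Real.logb c α⁻¹)) = q ^ (-(Real.logb c α⁻¹ / 2)) := by
      rw [htq, ← Real.rpow_mul hq0.le]
      congr 1
      ring
    calc α * q ^ (-(Real.logb c α⁻¹ / 2)) = α * α ^ (Real.logb c t) := by
          rw [h4, h5, h6]
      _ = α ^ (Real.logb c t + 1) := h3.symm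
      _ ≤ α ^ ((k : ℝ)) := h1
      _ = α ^ k := h2
  constructor
  · -- lower bound
    rw [hlam]
    apply le_ciInf
    intro z₀
    calc α * q ^ (-(Real.logb c α⁻¹ / 2)) * lam d a h
        ≤ α ^ k * lam d a h := mul_le_mul_of_nonneg_right hαk (hlam0 h)
      _ ≤ α ^ k * avg h z₀ := by
          apply mul_le_mul_of_nonneg_left _ (by positivity)
          rw [hlam]
          exact ciInf_le (hbdd h) z₀
      _ ≤ avg h' z₀ := havg_lower z₀
  · -- upper bound
    set C := q ^ ((d : ℝ) + 1) with hC_def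
    have hC1 : 1 ≤ C := Real.one_le_rpow hq1 (by positivity)
    have hC0 : 0 < C := by linarith
    have htnC : t ^ n ≤ C := by
      rw [htn, hC_def]
      exact Real.rpow_le_rpow_of_exponent_le hq1 (by linarith)
    have hkey : ∀ z₀, lam d a h' ≤ C * avg h z₀ := by
      intro z₀
      calc lam d a h' ≤ avg h' z₀ := by
            rw [hlam]; exact ciInf_le (hbdd h') z₀
        _ ≤ t ^ n * avg h z₀ := havg_upper z₀
        _ ≤ C * avg h z₀ := mul_le_mul_of_nonneg_right htnC (havg0 h z₀)
    have : lam d a h' / C ≤ lam d a h := by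
      rw [hlam h]
      apply le_ciInf
      intro z₀
      rw [div_le_iff₀' hC0]
      exact hkey z₀
    rw [div_le_iff₀' hC0] at this
    calc lam d a h' ≤ C * lam d a h := this
      _ = 1 * q ^ ((d : ℝ) + 1) * lam d a h := by rw [one_mul]
end
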